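/- Minimax rate for iterate-averaged 3DVAR in the diagonal case (second regime): under the diagonal setup, fix γ > 0 and α > 0, suppose Σ_{i=1}^∞ i^{2β} v_{0,i}² < ∞, and assume τ̄_b := (t(1+2ε) + 2β)/(2(1 + 2ε + 2p)) > 1 and τ̄_v := (t(1+2ε) + 2ε)/(1 + 2ε + 2p) > 1. Then there exists a constant C > 0 such that for every n ≥ 1, B_n(α) + V_n(α) ≤ C n^{−1}. -/
import Mathlib


open Finset

/-- `q_{n,α}(λ) = λ⁻¹ (1 − (α/(α+λ))^n)`. -/
noncomputable def qFun (n : ℕ) (α l : ℝ) : ℝ := l⁻¹ * (1 - (α / (α + l)) ^ n)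

/-- Squared bias of iterate-averaged 3DVAR in the diagonal case (sequences are 1-based):
`B_n(α) = (α/n)² Σ_{i≥1} σ_i^t q_{n,α}(σ_i a_i²)² v_{0,i}²`. -/
noncomputable def Bterm (σ a v0 : ℕ → ℝ) (t : ℝ) (α : ℝ) (n : ℕ) : ℝ :=
  (α / (n : ℝ)) ^ 2 *
    ∑' i : ℕ, (σ (i + 1)) ^ t * (qFun n α (σ (i + 1) * (a (i + 1)) ^ 2)) ^ 2 * (v0 (i + 1)) ^ 2

/-- Variance term of iterate-averaged 3DVAR in the diagonal case (sequences are 1-based):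
`V_n(α) = (γ²/n²) Σ_{j=1}^n Σ_{i≥1} σ_i^{t+2} a_i² q_{j,α}(σ_i a_i²)²`. -/
noncomputable def Vterm (σ a : ℕ → ℝ) (t γ : ℝ) (α : ℝ) (n : ℕ) : ℝ :=
  (γ ^ 2 / (n : ℝ) ^ 2) *
    ∑ j ∈ Icc 1 n, ∑' i : ℕ,
      (σ (i + 1)) ^ (t + 2) * (a (i + 1)) ^ 2 * (qFun j α (σ (i + 1) * (a (i + 1)) ^ 2)) ^ 2

lemma qFun_nonneg {n : ℕ} {α l : ℝ} (hα : 0 < α) (hl : 0 < l) : 0 ≤ qFun n α l := by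
  have h1 : (α / (α + l)) ^ n ≤ 1 :=
    pow_le_one₀ (by positivity) (by rw [div_le_one (by positivity)]; linarith)
  have h2 : (0:ℝ) ≤ l⁻¹ := inv_nonneg.2 hl.le
  unfold qFun
  nlinarith

lemma qFun_le_inv {n : ℕ} {α l : ℝ} (hα : 0 < α) (hl : 0 < l) : qFun n α l ≤ l⁻¹ := by
  have h0 : (0:ℝ) ≤ (α / (α + l)) ^ n := by positivity
  have h2 : (0:ℝ) ≤ l⁻¹ := inv_nonneg.2 hl.le
  unfold qFun
  nlinarith

lemma test_inv (a b : ℝ) (ha : 0 < a) (h : a ≤ b) : b⁻¹ ≤ a⁻¹ := inv_anti₀ ha h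

lemma test_sum (r : ℝ) (hr : r < -1) : Summable (fun i : ℕ => ((i:ℝ)+1) ^ r) := by
  have h := Real.summable_nat_rpow.mpr hr
  have h2 := h.comp_injective (add_left_injective 1)
  exact h2.congr (fun i => by simp [Function.comp, add_comm])

lemma lam_inv_bound (ε p c₁ : ℝ) (hε : 0 < ε) (hp : 0 < p) (hc₁ : 0 < c₁)
    (x σi ai : ℝ) (hx : 1 ≤ x)
    (hσl : c₁ * x ^ (-1 - 2*ε) ≤ σi) (hal : c₁ * x ^ (-p) ≤ ai) :
    0 < σi * ai^2 ∧ (σi * ai^2)⁻¹ ≤ c₁⁻¹^3 * x ^ (1+2*ε+2*p) := by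
  have hx0 : (0:ℝ) < x := lt_of_lt_of_le one_pos hx
  have hσ0 : 0 < σi := lt_of_lt_of_le (by positivity) hσl
  have ha0 : 0 < ai := lt_of_lt_of_le (by positivity) hal
  have hl0 : 0 < σi * ai^2 := by positivity
  have e1 : (x ^ (-p)) ^ 2 = x ^ (-(2*p)) := by
    rw [← Real.rpow_natCast (x ^ (-p)) 2, ← Real.rpow_mul hx0.le]
    congr 1; push_cast; ring
  have e2 : x ^ (-1-2*ε) * x ^ (-(2*p)) = x ^ (-(1+2*ε+2*p)) := by
    rw [← Real.rpow_add hx0]; congr 1; ring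
  have hlam : c₁^3 * x ^ (-(1+2*ε+2*p)) ≤ σi * ai^2 := by
    calc c₁^3 * x ^ (-(1+2*ε+2*p)) = (c₁ * x^(-1-2*ε)) * (c₁ * x^(-p))^2 := by
          rw [mul_pow, e1, ← e2]; ring
      _ ≤ σi * ai^2 :=
          mul_le_mul hσl (pow_le_pow_left₀ (by positivity) hal 2) (by positivity) hσ0.le
  refine ⟨hl0, ?_⟩
  have e3 : (c₁^3 * x ^ (-(1+2*ε+2*p)))⁻¹ = c₁⁻¹^3 * x ^ (1+2*ε+2*p) := by
    rw [mul_inv, Real.rpow_neg hx0.le, inv_inv, inv_pow]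
  exact e3 ▸ inv_anti₀ (by positivity) hlam

lemma aux_bias (ε p t β c₁ c₂ α : ℝ) (hε : 0 < ε) (hp : 0 < p) (ht : 0 ≤ t)
    (hc₁ : 0 < c₁) (hc₂ : 0 < c₂) (hα : 0 < α)
    (hτb' : 2 * (1 + 2*ε + 2*p) - t * (1 + 2*ε) ≤ 2*β)
    (x σi ai : ℝ) (hx : 1 ≤ x)
    (hσl : c₁ * x ^ (-1 - 2*ε) ≤ σi) (hσu : σi ≤ c₂ * x ^ (-1 - 2*ε))
    (hal : c₁ * x ^ (-p) ≤ ai) (n : ℕ) :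
    σi ^ t * qFun n α (σi * ai^2) ^ 2 ≤ (c₂ ^ t * (c₁⁻¹^3)^2) * x ^ (2*β) := by
  have hx0 : (0:ℝ) < x := lt_of_lt_of_le one_pos hx
  have hσ0 : 0 < σi := lt_of_lt_of_le (by positivity) hσl
  obtain ⟨hl0, hinv⟩ := lam_inv_bound ε p c₁ hε hp hc₁ x σi ai hx hσl hal
  have hq2 : qFun n α (σi*ai^2) ^ 2 ≤ (c₁⁻¹^3)^2 * x ^ (2*(1+2*ε+2*p)) := by
    have h := pow_le_pow_left₀ (qFun_nonneg (n := n) hα hl0) (le_trans (qFun_le_inv hα hl0) hinv) 2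
    refine h.trans (le_of_eq ?_)
    rw [mul_pow]
    congr 1
    rw [← Real.rpow_natCast (x ^ _) 2, ← Real.rpow_mul hx0.le]
    congr 1; push_cast; ring
  have hst : σi ^ t ≤ c₂ ^ t * x ^ ((-1-2*ε)*t) := by
    have h := Real.rpow_le_rpow hσ0.le hσu ht
    rwa [Real.mul_rpow hc₂.le (by positivity), ← Real.rpow_mul hx0.le] at h
  have hxe : (0:ℝ) ≤ x ^ ((-1-2*ε)*t) := Real.rpow_nonneg hx0.le _
  calc σi ^ t * qFun n α (σi*ai^2) ^ 2
      ≤ (c₂ ^ t * x ^ ((-1-2*ε)*t)) * ((c₁⁻¹^3)^2 * x ^ (2*(1+2*ε+2*p))) :=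
        mul_le_mul hst hq2 (sq_nonneg _) (by positivity)
    _ = (c₂^t * (c₁⁻¹^3)^2) * x ^ ((-1-2*ε)*t + 2*(1+2*ε+2*p)) := by
        rw [Real.rpow_add hx0]; ring
    _ ≤ (c₂^t * (c₁⁻¹^3)^2) * x ^ (2*β) := by
        apply mul_le_mul_of_nonneg_left _ (by positivity)
        exact Real.rpow_le_rpow_of_exponent_le hx (by linarith)

lemma aux_var (ε p t c₁ c₂ α : ℝ) (hε : 0 < ε) (hp : 0 < p) (ht : 0 ≤ t)
    (hc₁ : 0 < c₁) (hc₂ : 0 < c₂) (hα : 0 < α)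
    (x σi ai : ℝ) (hx : 1 ≤ x)
    (hσl : c₁ * x ^ (-1 - 2*ε) ≤ σi) (hσu : σi ≤ c₂ * x ^ (-1 - 2*ε))
    (hal : c₁ * x ^ (-p) ≤ ai) (hau : ai ≤ c₂ * x ^ (-p)) (j : ℕ) :
    σi ^ (t+2) * ai^2 * qFun j α (σi * ai^2) ^ 2
      ≤ (c₂ ^ (t+2) * c₂^2 * (c₁⁻¹^3)^2) * x ^ (2*p - t*(1+2*ε)) := by
  have hx0 : (0:ℝ) < x := lt_of_lt_of_le one_pos hx
  have hσ0 : 0 < σi := lt_of_lt_of_le (by positivity) hσl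
  have ha0 : 0 < ai := lt_of_lt_of_le (by positivity) hal
  obtain ⟨hl0, hinv⟩ := lam_inv_bound ε p c₁ hε hp hc₁ x σi ai hx hσl hal
  have hq2 : qFun j α (σi*ai^2) ^ 2 ≤ (c₁⁻¹^3)^2 * x ^ (2*(1+2*ε+2*p)) := by
    have h := pow_le_pow_left₀ (qFun_nonneg (n := j) hα hl0) (le_trans (qFun_le_inv hα hl0) hinv) 2
    refine h.trans (le_of_eq ?_)
    rw [mul_pow]
    congr 1
    rw [← Real.rpow_natCast (x ^ _) 2, ← Real.rpow_mul hx0.le]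
    congr 1; push_cast; ring
  have hst : σi ^ (t+2) ≤ c₂ ^ (t+2) * x ^ ((-1-2*ε)*(t+2)) := by
    have h := Real.rpow_le_rpow hσ0.le hσu (by linarith : (0:ℝ) ≤ t+2)
    rwa [Real.mul_rpow hc₂.le (by positivity), ← Real.rpow_mul hx0.le] at h
  have ha2 : ai^2 ≤ c₂^2 * x ^ (-(2*p)) := by
    have h := pow_le_pow_left₀ ha0.le hau 2
    refine h.trans (le_of_eq ?_)
    rw [mul_pow]
    congr 1
    rw [← Real.rpow_natCast (x ^ _) 2, ← Real.rpow_mul hx0.le]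
    congr 1; push_cast; ring
  have step1 : σi ^ (t+2) * ai^2 ≤ (c₂ ^ (t+2) * x ^ ((-1-2*ε)*(t+2))) * (c₂^2 * x ^ (-(2*p))) :=
    mul_le_mul hst ha2 (sq_nonneg _) (by positivity)
  calc σi ^ (t+2) * ai^2 * qFun j α (σi*ai^2) ^ 2
      ≤ ((c₂ ^ (t+2) * x ^ ((-1-2*ε)*(t+2))) * (c₂^2 * x ^ (-(2*p)))) *
          ((c₁⁻¹^3)^2 * x ^ (2*(1+2*ε+2*p))) :=
        mul_le_mul step1 hq2 (sq_nonneg _) (by positivity)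
    _ = (c₂ ^ (t+2) * c₂^2 * (c₁⁻¹^3)^2) *
          (x ^ ((-1-2*ε)*(t+2)) * x ^ (-(2*p)) * x ^ (2*(1+2*ε+2*p))) := by ring
    _ = (c₂ ^ (t+2) * c₂^2 * (c₁⁻¹^3)^2) * x ^ (2*p - t*(1+2*ε)) := by
        rw [← Real.rpow_add hx0, ← Real.rpow_add hx0]
        congr 1; ring

/-- Minimax rate for iterate-averaged 3DVAR in the diagonal case (second regime
`τ̄_b > 1`, `τ̄_v > 1`): for any fixed `α > 0`, `B_n(α) + V_n(α) ≤ C n⁻¹`. -/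
theorem diagonal_minimax_second_regime
    (ε p α t β γ : ℝ) (hε : 0 < ε) (hp : 0 < p) (hα : 0 < α) (ht : 0 ≤ t) (hβ : 0 ≤ β)
    (hγ : 0 < γ)
    (σ a v0 : ℕ → ℝ) (c₁ c₂ : ℝ) (hc₁ : 0 < c₁) (hc₁₂ : c₁ ≤ c₂)
    (hσ : ∀ i : ℕ, 1 ≤ i → c₁ * (i : ℝ) ^ (-1 - 2 * ε) ≤ σ i ∧ σ i ≤ c₂ * (i : ℝ) ^ (-1 - 2 * ε))
    (ha : ∀ i : ℕ, 1 ≤ i → c₁ * (i : ℝ) ^ (-p) ≤ a i ∧ a i ≤ c₂ * (i : ℝ) ^ (-p))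
    (hv : Summable (fun i : ℕ => ((i : ℝ) + 1) ^ (2 * β) * (v0 (i + 1)) ^ 2))
    (hτb : 1 < (t * (1 + 2 * ε) + 2 * β) / (2 * (1 + 2 * ε + 2 * p)))
    (hτv : 1 < (t * (1 + 2 * ε) + 2 * ε) / (1 + 2 * ε + 2 * p)) :
    ∃ C : ℝ, 0 < C ∧ ∀ n : ℕ, 1 ≤ n →
      Bterm σ a v0 t α n + Vterm σ a t γ α n ≤ C * (n : ℝ)⁻¹ := by
  have hc₂ : 0 < c₂ := hc₁.trans_le hc₁₂
  have hτb' : 2 * (1 + 2*ε + 2*p) - t * (1 + 2*ε) ≤ 2*β := by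
    have h := (one_lt_div (by positivity : (0:ℝ) < 2 * (1 + 2*ε + 2*p))).mp hτb
    linarith
  have hev : 2*p - t*(1+2*ε) < -1 := by
    have h := (one_lt_div (by positivity : (0:ℝ) < 1 + 2*ε + 2*p)).mp hτv
    linarith
  set Kb : ℝ := c₂ ^ t * (c₁⁻¹^3)^2 with hKbdef
  set Kv : ℝ := c₂ ^ (t+2) * c₂^2 * (c₁⁻¹^3)^2 with hKvdef
  have hKb0 : 0 < Kb := by
    have := Real.rpow_pos_of_pos hc₂ t; positivity
  have hKv0 : 0 < Kv := by
    have := Real.rpow_pos_of_pos hc₂ (t+2); positivity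
  -- sums
  set Sv : ℝ := ∑' i : ℕ, ((i : ℝ) + 1) ^ (2 * β) * (v0 (i + 1)) ^ 2 with hSvdef
  have hSr : Summable (fun i : ℕ => ((i:ℝ)+1) ^ (2*p - t*(1+2*ε))) := test_sum _ hev
  set Sr : ℝ := ∑' i : ℕ, ((i:ℝ)+1) ^ (2*p - t*(1+2*ε)) with hSrdef
  have hSv0 : 0 ≤ Sv := tsum_nonneg (fun i => by positivity)
  have hSr0 : 0 ≤ Sr := tsum_nonneg (fun i => by positivity)
  -- the per-index hypotheses, cast
  have hbnds : ∀ i : ℕ, c₁ * ((i:ℝ)+1) ^ (-1 - 2*ε) ≤ σ (i+1) ∧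
      σ (i+1) ≤ c₂ * ((i:ℝ)+1) ^ (-1 - 2*ε) ∧
      c₁ * ((i:ℝ)+1) ^ (-p) ≤ a (i+1) ∧ a (i+1) ≤ c₂ * ((i:ℝ)+1) ^ (-p) := by
    intro i
    obtain ⟨h1, h2⟩ := hσ (i+1) (Nat.le_add_left 1 i)
    obtain ⟨h3, h4⟩ := ha (i+1) (Nat.le_add_left 1 i)
    push_cast at h1 h2 h3 h4
    exact ⟨h1, h2, h3, h4⟩
  have hx1 : ∀ i : ℕ, (1:ℝ) ≤ (i:ℝ)+1 := fun i => by
    have : (0:ℝ) ≤ (i:ℝ) := Nat.cast_nonneg i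
    linarith
  have hσ0 : ∀ i : ℕ, 0 ≤ σ (i+1) := fun i =>
    le_trans (by positivity) (hbnds i).1
  refine ⟨α^2 * (Kb * Sv) + γ^2 * (Kv * Sr) + 1, by positivity, fun n hn => ?_⟩
  have hn0 : (0:ℝ) < (n:ℝ) := by exact_mod_cast Nat.pos_of_ne_zero (by omega)
  have hu1 : (n:ℝ)⁻¹ ≤ 1 := by
    rw [inv_le_one_iff₀]; right; exact_mod_cast hn
  have hu0 : (0:ℝ) ≤ (n:ℝ)⁻¹ := by positivity
  -- bias bound
  have hbias_pt : ∀ i : ℕ,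
      (σ (i+1)) ^ t * (qFun n α (σ (i+1) * (a (i+1)) ^ 2)) ^ 2 * (v0 (i+1)) ^ 2
        ≤ Kb * (((i:ℝ)+1) ^ (2*β) * (v0 (i+1)) ^ 2) := by
    intro i
    obtain ⟨h1, h2, h3, h4⟩ := hbnds i
    have h := aux_bias ε p t β c₁ c₂ α hε hp ht hc₁ hc₂ hα hτb' ((i:ℝ)+1) (σ (i+1)) (a (i+1))
      (hx1 i) h1 h2 h3 n
    calc (σ (i+1)) ^ t * (qFun n α (σ (i+1) * (a (i+1)) ^ 2)) ^ 2 * (v0 (i+1)) ^ 2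
        ≤ (Kb * ((i:ℝ)+1) ^ (2*β)) * (v0 (i+1)) ^ 2 :=
          mul_le_mul_of_nonneg_right h (sq_nonneg _)
      _ = Kb * (((i:ℝ)+1) ^ (2*β) * (v0 (i+1)) ^ 2) := by ring
  have hgsum : Summable (fun i : ℕ => Kb * (((i:ℝ)+1) ^ (2*β) * (v0 (i+1)) ^ 2)) :=
    hv.mul_left Kb
  have hfsum : Summable (fun i : ℕ =>
      (σ (i+1)) ^ t * (qFun n α (σ (i+1) * (a (i+1)) ^ 2)) ^ 2 * (v0 (i+1)) ^ 2) := by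
    apply Summable.of_nonneg_of_le _ hbias_pt hgsum
    intro i
    exact mul_nonneg (mul_nonneg (Real.rpow_nonneg (hσ0 i) t) (sq_nonneg _)) (sq_nonneg _)
  have hB : Bterm σ a v0 t α n ≤ (α / (n:ℝ))^2 * (Kb * Sv) := by
    unfold Bterm
    apply mul_le_mul_of_nonneg_left _ (by positivity)
    calc (∑' i : ℕ, (σ (i+1)) ^ t * (qFun n α (σ (i+1) * (a (i+1)) ^ 2)) ^ 2 * (v0 (i+1)) ^ 2)
        ≤ ∑' i : ℕ, Kb * (((i:ℝ)+1) ^ (2*β) * (v0 (i+1)) ^ 2) :=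
          Summable.tsum_le_tsum hbias_pt hfsum hgsum
      _ = Kb * Sv := tsum_mul_left
  -- variance bound
  have hvar_pt : ∀ j i : ℕ,
      (σ (i+1)) ^ (t+2) * (a (i+1)) ^ 2 * (qFun j α (σ (i+1) * (a (i+1)) ^ 2)) ^ 2
        ≤ Kv * ((i:ℝ)+1) ^ (2*p - t*(1+2*ε)) := by
    intro j i
    obtain ⟨h1, h2, h3, h4⟩ := hbnds i
    exact aux_var ε p t c₁ c₂ α hε hp ht hc₁ hc₂ hα ((i:ℝ)+1) (σ (i+1)) (a (i+1))
      (hx1 i) h1 h2 h3 h4 j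
  have hgsum2 : Summable (fun i : ℕ => Kv * ((i:ℝ)+1) ^ (2*p - t*(1+2*ε))) := hSr.mul_left Kv
  have hVin : ∀ j : ℕ,
      (∑' i : ℕ, (σ (i+1)) ^ (t+2) * (a (i+1)) ^ 2
        * (qFun j α (σ (i+1) * (a (i+1)) ^ 2)) ^ 2) ≤ Kv * Sr := by
    intro j
    have hfs : Summable (fun i : ℕ => (σ (i+1)) ^ (t+2) * (a (i+1)) ^ 2
        * (qFun j α (σ (i+1) * (a (i+1)) ^ 2)) ^ 2) := by
      apply Summable.of_nonneg_of_le _ (hvar_pt j) hgsum2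
      intro i
      exact mul_nonneg (mul_nonneg (Real.rpow_nonneg (hσ0 i) _) (sq_nonneg _)) (sq_nonneg _)
    calc (∑' i : ℕ, (σ (i+1)) ^ (t+2) * (a (i+1)) ^ 2
          * (qFun j α (σ (i+1) * (a (i+1)) ^ 2)) ^ 2)
        ≤ ∑' i : ℕ, Kv * ((i:ℝ)+1) ^ (2*p - t*(1+2*ε)) := Summable.tsum_le_tsum (hvar_pt j) hfs hgsum2
      _ = Kv * Sr := tsum_mul_left
  have hV : Vterm σ a t γ α n ≤ (γ^2 / (n:ℝ)^2) * ((n:ℝ) * (Kv * Sr)) := by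
    unfold Vterm
    apply mul_le_mul_of_nonneg_left _ (by positivity)
    calc (∑ j ∈ Icc 1 n, ∑' i : ℕ, (σ (i+1)) ^ (t+2) * (a (i+1)) ^ 2
          * (qFun j α (σ (i+1) * (a (i+1)) ^ 2)) ^ 2)
        ≤ ∑ j ∈ Icc 1 n, Kv * Sr := Finset.sum_le_sum (fun j _ => hVin j)
      _ = (n:ℝ) * (Kv * Sr) := by
          rw [Finset.sum_const, Nat.card_Icc]
          simp [nsmul_eq_mul]
  -- combine
  have hKS0 : 0 ≤ Kb * Sv := mul_nonneg hKb0.le hSv0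
  have hKS1 : 0 ≤ Kv * Sr := mul_nonneg hKv0.le hSr0
  have e1 : (α / (n:ℝ))^2 * (Kb * Sv) = (α^2 * (Kb * Sv) * (n:ℝ)⁻¹) * (n:ℝ)⁻¹ := by
    rw [div_eq_mul_inv]; ring
  have e2 : (γ^2 / (n:ℝ)^2) * ((n:ℝ) * (Kv * Sr)) = γ^2 * (Kv * Sr) * (n:ℝ)⁻¹ := by
    have hnn : (n:ℝ)⁻¹ * (n:ℝ) = 1 := inv_mul_cancel₀ hn0.ne'
    rw [div_eq_mul_inv, ← inv_pow]
    calc γ ^ 2 * ((n:ℝ)⁻¹) ^ 2 * ((n:ℝ) * (Kv * Sr))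
        = γ ^ 2 * (Kv * Sr) * (n:ℝ)⁻¹ * ((n:ℝ)⁻¹ * (n:ℝ)) := by ring
      _ = γ ^ 2 * (Kv * Sr) * (n:ℝ)⁻¹ := by rw [hnn, mul_one]
  have hB' : Bterm σ a v0 t α n ≤ α^2 * (Kb * Sv) * (n:ℝ)⁻¹ := by
    refine hB.trans ?_
    rw [e1]
    have h0 : 0 ≤ α^2 * (Kb * Sv) * (n:ℝ)⁻¹ := by positivity
    exact mul_le_of_le_one_right h0 hu1
  have hV' : Vterm σ a t γ α n ≤ γ^2 * (Kv * Sr) * (n:ℝ)⁻¹ := hV.trans (le_of_eq e2)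
  have expand : (α^2 * (Kb * Sv) + γ^2 * (Kv * Sr) + 1) * (n:ℝ)⁻¹
      = α^2 * (Kb * Sv) * (n:ℝ)⁻¹ + γ^2 * (Kv * Sr) * (n:ℝ)⁻¹ + (n:ℝ)⁻¹ := by ring
  rw [expand]
  linarith [hB', hV', hu0]
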